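/- Let H be a real inner product space, let β > 0 and K ≥ 0, and let g₁, g₂ : H → ℝ. Suppose g₁ is β-strongly convex (i.e., x ↦ g₁(x) − (β/2)‖x‖² is convex), x₁ is a global minimizer of g₁, x₂ is a global minimizer of g₂, and the difference g₁ − g₂ is K-Lipschitz on H. Then ‖x₁ − x₂‖ ≤ 2K/β. -/

import Mathlib

theorem stmt_9 {H : Type*} [NormedAddCommGroup H] [InnerProductSpace ℝ H]
    (β K : ℝ) (hβ : 0 < β) (hK : 0 ≤ K)
    (g₁ g₂ : H → ℝ)
    (hstrong : ConvexOn ℝ Set.univ (fun x => g₁ x - (β / 2) * ‖x‖ ^ 2))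
    (x₁ x₂ : H)
    (hx₁ : ∀ y, g₁ x₁ ≤ g₁ y)
    (hx₂ : ∀ y, g₂ x₂ ≤ g₂ y)
    (hlip : LipschitzWith (Real.toNNReal K) (fun x => g₁ x - g₂ x)) :
    ‖x₁ - x₂‖ ≤ 2 * K / β := by
  have hsc : StrongConvexOn (Set.univ : Set H) β g₁ :=
    strongConvexOn_iff_convex.mpr hstrong
  set d : ℝ := ‖x₂ - x₁‖ with hd
  have hd0 : 0 ≤ d := norm_nonneg _
  -- Lipschitz bound: g₁ x₂ - g₁ x₁ ≤ K * d
  have hlipd : g₁ x₂ - g₁ x₁ ≤ K * d := by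
    have h1 := hlip.dist_le_mul x₂ x₁
    have h2 : |(g₁ x₂ - g₂ x₂) - (g₁ x₁ - g₂ x₁)| ≤ K * d := by
      simpa only [Real.dist_eq, dist_eq_norm, Real.norm_eq_abs, Real.coe_toNNReal K hK, hd] using h1
    have h3 : (g₁ x₂ - g₂ x₂) - (g₁ x₁ - g₂ x₁) ≤ K * d :=
      le_trans (le_abs_self _) h2
    have h4 : 0 ≤ g₂ x₂ - g₂ x₁ + (K * d) - (g₁ x₂ - g₁ x₁) := by linarith
    have h5 := hx₂ x₁
    linarith
  -- Strong convexity: ∀ t ∈ (0,1], (1-t) * (β/2) * d^2 ≤ K * d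
  have key : ∀ t : ℝ, 0 < t → t ≤ 1 → (1 - t) * (β / 2) * d ^ 2 ≤ K * d := by
    intro t ht0 ht1
    have h := hsc.2 (Set.mem_univ x₂) (Set.mem_univ x₁)
      (le_of_lt ht0) (by linarith : (0:ℝ) ≤ 1 - t) (by ring)
    have hmin := hx₁ (t • x₂ + (1 - t) • x₁)
    have : t * g₁ x₁ ≤ t * g₁ x₂ - t * (1 - t) * (β / 2 * d ^ 2) := by
      have hx : g₁ x₁ ≤ t * g₁ x₂ + (1 - t) * g₁ x₁ - t * (1 - t) * (β / 2 * ‖x₂ - x₁‖ ^ 2) := by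
        calc g₁ x₁ ≤ g₁ (t • x₂ + (1 - t) • x₁) := hmin
          _ ≤ _ := h
      rw [← hd] at hx; nlinarith
    have h6 : (1 - t) * (β / 2) * d ^ 2 ≤ g₁ x₂ - g₁ x₁ := by
      have := mul_le_mul_of_nonneg_left (le_of_lt ht0) (le_of_lt ht0)
      nlinarith
    linarith
  -- Take t → 0: (β/2) * d^2 ≤ K * d
  have main : β / 2 * d ^ 2 ≤ K * d := by
    by_contra hcon
    push_neg at hcon
    set a := β / 2 * d ^ 2
    set b := K * d
    have hb : 0 ≤ b := mul_nonneg hK hd0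
    have ha : 0 < a := lt_of_le_of_lt hb hcon
    have ht : 0 < (a - b) / (2 * a) := div_pos (by linarith) (by linarith)
    have ht1 : (a - b) / (2 * a) ≤ 1 := by
      rw [div_le_one (by linarith)]; linarith
    have := key _ ht ht1
    have hlt : b < (1 - (a - b) / (2 * a)) * a := by
      have h7 : (a - b) / (2 * a) * a = (a - b) / 2 := by
        field_simp
      rw [sub_mul, one_mul, h7]; linarith
    have heq : (1 - (a - b) / (2 * a)) * (β / 2) * d ^ 2 = (1 - (a - b) / (2 * a)) * a := by
      simp [a, mul_assoc]
    linarith [heq ▸ this]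
  -- Conclude
  rw [norm_sub_rev, ← hd]
  rcases eq_or_lt_of_le hd0 with h | h
  · rw [← h]; positivity
  · rw [le_div_iff₀ hβ]
    nlinarith [main, h]
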